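/- Let C_n : ℝ → [0,1] be a function with nC_n(y) ≥ 1 for all y in the support of a discrete probability measure F_n* with atoms of mass 1/n. Define B_n(x) = n ∫_{(-∞,x)} log(1 − 1/(nC_n(y) + 1)) dF_n*(y) + ∫_{(-∞,x)} dF_n*(y)/(C_n(y) + 1/n). Then −n^{-1} ∫_{(-∞,x)} dF_n*(y)/C_n(y)^2 ≤ B_n(x) ≤ 0 for every x. -/

import Mathlib

open MeasureTheory Set

lemma pointwise_log_bounds (n : ℕ) (hn : 1 ≤ n) (c : ℝ)
    (h1 : (n : ℝ)⁻¹ ≤ c) (h2 : c ≤ 1) :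
    -((n : ℝ)⁻¹ * (1 / c ^ 2)) ≤ n * Real.log (1 - 1 / (n * c + 1)) + 1 / (c + 1 / n) ∧
      n * Real.log (1 - 1 / (n * c + 1)) + 1 / (c + 1 / n) ≤ 0 := by
  have hn0 : (0 : ℝ) < n := by exact_mod_cast hn
  have hc : 0 < c := lt_of_lt_of_le (by positivity) h1
  set t : ℝ := n * c with ht_def
  have ht : (1 : ℝ) ≤ t := by
    have := mul_le_mul_of_nonneg_left h1 hn0.le
    rwa [mul_inv_cancel₀ hn0.ne'] at this
  have ht0 : 0 < t := lt_of_lt_of_le one_pos ht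
  have ht1 : 0 < t + 1 := by linarith
  have heq : 1 - 1 / (t + 1) = t / (t + 1) := by field_simp; ring
  have heq2 : 1 / (c + 1 / n) = n / (t + 1) := by
    rw [ht_def]; field_simp
  have hlog1 : Real.log (t / (t + 1)) ≤ -1 / (t + 1) := by
    have := Real.log_le_sub_one_of_pos (show (0:ℝ) < t / (t+1) by positivity)
    have e : t / (t + 1) - 1 = -1 / (t + 1) := by field_simp; ring
    linarith [e ▸ this]
  have hlog2 : -(1 / t) ≤ Real.log (t / (t + 1)) := by
    have hinv : Real.log (t / (t+1)) = - Real.log ((t+1) / t) := by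
      rw [← Real.log_inv, inv_div]
    have := Real.log_le_sub_one_of_pos (show (0:ℝ) < (t+1) / t by positivity)
    have e : (t + 1) / t - 1 = 1 / t := by field_simp; ring
    rw [hinv]; rw [e] at this; linarith
  rw [heq, heq2]
  constructor
  · have h1' : (n : ℝ) * (-(1 / t)) ≤ n * Real.log (t / (t + 1)) :=
      mul_le_mul_of_nonneg_left hlog2 hn0.le
    have e1 : (n : ℝ)⁻¹ * (1 / c ^ 2) = n / (t * t) := by
      rw [ht_def]; field_simp
    have e2 : (n : ℝ) * (-(1 / t)) + n / (t + 1) = -(n / (t * (t + 1))) := by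
      field_simp; ring
    have e3 : (n : ℝ) / (t * (t + 1)) ≤ n / (t * t) := by
      gcongr
      linarith
    linarith
  · have h1' : (n : ℝ) * Real.log (t / (t + 1)) ≤ n * (-1 / (t + 1)) :=
      mul_le_mul_of_nonneg_left hlog1 hn0.le
    have : (n : ℝ) * (-1 / (t + 1)) + n / (t + 1) = 0 := by ring
    linarith

/-- Bounds on `B_n(x)`: with `nC_n ≥ 1` on the support of the empirical measure `F_n*`,
`−n⁻¹ ∫_{(-∞,x)} dF_n*/C_n² ≤ B_n(x) ≤ 0`. -/
theorem Bn_bounds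
    (n : ℕ) (hn : 1 ≤ n)
    (μn : Measure ℝ) [IsProbabilityMeasure μn]
    (Cn : ℝ → ℝ) (hCnmeas : Measurable Cn)
    (hCn : ∀ᵐ y ∂μn, (n : ℝ)⁻¹ ≤ Cn y ∧ Cn y ≤ 1)
    (Bn : ℝ → ℝ)
    (hBn : ∀ x, Bn x =
      n * (∫ y in Iio x, Real.log (1 - 1 / (n * Cn y + 1)) ∂μn) +
      ∫ y in Iio x, 1 / (Cn y + 1 / n) ∂μn) :
    ∀ x : ℝ,
      -((n : ℝ)⁻¹ * ∫ y in Iio x, 1 / Cn y ^ 2 ∂μn) ≤ Bn x ∧ Bn x ≤ 0 := by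
  intro x
  have hn0 : (0 : ℝ) < n := by exact_mod_cast hn
  have hae : ∀ᵐ y ∂(μn.restrict (Iio x)), (n : ℝ)⁻¹ ≤ Cn y ∧ Cn y ≤ 1 :=
    ae_restrict_of_ae hCn
  -- measurability
  have m1 : AEStronglyMeasurable (fun y => Real.log (1 - 1 / (n * Cn y + 1)))
      (μn.restrict (Iio x)) := by
    exact (Real.measurable_log.comp (by fun_prop)).aestronglyMeasurable
  have m2 : AEStronglyMeasurable (fun y => 1 / (Cn y + 1 / n)) (μn.restrict (Iio x)) := by
    apply Measurable.aestronglyMeasurable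
    fun_prop
  have m3 : AEStronglyMeasurable (fun y => 1 / Cn y ^ 2) (μn.restrict (Iio x)) := by
    apply Measurable.aestronglyMeasurable
    fun_prop
  -- pointwise a.e. bounds helper
  have key : ∀ᵐ y ∂(μn.restrict (Iio x)),
      -((n : ℝ)⁻¹ * (1 / Cn y ^ 2)) ≤
        n * Real.log (1 - 1 / (n * Cn y + 1)) + 1 / (Cn y + 1 / n) ∧
      n * Real.log (1 - 1 / (n * Cn y + 1)) + 1 / (Cn y + 1 / n) ≤ 0 := by
    filter_upwards [hae] with y hy
    exact pointwise_log_bounds n hn (Cn y) hy.1 hy.2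
  -- integrability via boundedness
  have i1 : Integrable (fun y => Real.log (1 - 1 / (n * Cn y + 1))) (μn.restrict (Iio x)) := by
    apply (integrable_const (1 : ℝ)).mono' m1
    filter_upwards [hae] with y hy
    have hc : 0 < Cn y := lt_of_lt_of_le (by positivity) hy.1
    have ht : (1 : ℝ) ≤ n * Cn y := by
      have := mul_le_mul_of_nonneg_left hy.1 hn0.le
      rwa [mul_inv_cancel₀ hn0.ne'] at this
    set t := (n : ℝ) * Cn y
    have ht1 : (0:ℝ) < t + 1 := by linarith
    have heq : 1 - 1 / (t + 1) = t / (t + 1) := by field_simp; ring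
    rw [heq]
    rw [Real.norm_eq_abs, abs_le]
    constructor
    · have hinv : Real.log (t / (t+1)) = - Real.log ((t+1) / t) := by
        rw [← Real.log_inv, inv_div]
      have h := Real.log_le_sub_one_of_pos (show (0:ℝ) < (t+1) / t by positivity)
      have e : (t + 1) / t - 1 = 1 / t := by field_simp; ring
      have h1t : (1:ℝ) / t ≤ 1 := by
        rw [div_le_one (by linarith)]; linarith
      rw [hinv]
      have := e ▸ h
      linarith
    · have := Real.log_le_sub_one_of_pos (show (0:ℝ) < t / (t+1) by positivity)
      have : t / (t + 1) ≤ 1 := by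
        rw [div_le_one ht1]; linarith
      nlinarith [Real.log_le_sub_one_of_pos (show (0:ℝ) < t / (t+1) by positivity)]
  have i2 : Integrable (fun y => 1 / (Cn y + 1 / n)) (μn.restrict (Iio x)) := by
    apply (integrable_const ((n : ℝ))).mono' m2
    filter_upwards [hae] with y hy
    have hc : 0 < Cn y := lt_of_lt_of_le (by positivity) hy.1
    have hd : (n : ℝ)⁻¹ ≤ Cn y + 1 / n := by
      rw [one_div]; linarith
    have hd0 : (0:ℝ) < Cn y + 1 / n := lt_of_lt_of_le (by positivity) hd
    rw [Real.norm_eq_abs, abs_of_pos (one_div_pos.mpr hd0)]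
    rw [div_le_iff₀ hd0]
    calc (1:ℝ) = n * ((n:ℝ))⁻¹ := (mul_inv_cancel₀ hn0.ne').symm
    _ ≤ n * (Cn y + 1/n) := by gcongr
  have i3 : Integrable (fun y => 1 / Cn y ^ 2) (μn.restrict (Iio x)) := by
    apply (integrable_const ((n : ℝ)^2)).mono' m3
    filter_upwards [hae] with y hy
    have hc : 0 < Cn y := lt_of_lt_of_le (by positivity) hy.1
    rw [Real.norm_eq_abs, abs_of_pos (one_div_pos.mpr (pow_pos hc 2))]
    have h2 : ((n:ℝ)⁻¹) ^ 2 ≤ Cn y ^ 2 := pow_le_pow_left₀ (by positivity) hy.1 2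
    rw [div_le_iff₀ (pow_pos hc 2)]
    calc (1:ℝ) = (n:ℝ)^2 * ((n:ℝ)⁻¹)^2 := by field_simp
    _ ≤ (n:ℝ)^2 * Cn y ^2 := by gcongr
  -- combine the integrals
  have if' : Integrable (fun y => n * Real.log (1 - 1 / (n * Cn y + 1)) + 1 / (Cn y + 1 / n))
      (μn.restrict (Iio x)) := (i1.const_mul _).add i2
  have hBx : Bn x = ∫ y in Iio x,
      ((n : ℝ) * Real.log (1 - 1 / (n * Cn y + 1)) + 1 / (Cn y + 1 / n)) ∂μn := by
    rw [hBn x, integral_add (i1.const_mul _) i2, integral_const_mul]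
  constructor
  · rw [hBx]
    have ig : Integrable (fun y => -((n : ℝ)⁻¹ * (1 / Cn y ^ 2))) (μn.restrict (Iio x)) :=
      (i3.const_mul _).neg
    have := integral_mono_ae ig if' (by filter_upwards [key] with y hy using hy.1)
    rwa [integral_neg, integral_const_mul] at this
  · rw [hBx]
    exact integral_nonpos_of_ae (by filter_upwards [key] with y hy using hy.2)
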